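/- Let A ∈ ℂ^{n×n} with ρ(ĀA) < 1, where Ā is the entrywise complex conjugate and ρ the spectral radius. Then for every Hermitian W ∈ ℂ^{n×n} there exists a unique Hermitian X with X − A^H X̄ A = W, it is given by the convergent series X = Σ_{k=0}^∞ ((ĀA)^k)^H (W + A^H W̄ A) (ĀA)^k, and the solution map is order preserving: if W ≥ W' (Loewner order) and X, X' are the corresponding solutions, then X ≥ X'. -/

import Mathlib

open Matrix Filter Topology
open scoped ComplexOrder

noncomputable section

namespace CDARE

/-- Entrywise complex conjugate of a matrix. -/
def mconj {p q : ℕ} (M : Matrix (Fin p) (Fin q) ℂ) : Matrix (Fin p) (Fin q) ℂ :=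
  M.map (starRingEnd ℂ)

section Aux

variable {n : ℕ}

lemma mconj_apply {p q : ℕ} (M : Matrix (Fin p) (Fin q) ℂ) (i j) :
    mconj M i j = starRingEnd ℂ (M i j) := rfl

lemma mconj_add (M N : Matrix (Fin n) (Fin n) ℂ) :
    mconj (M + N) = mconj M + mconj N := by
  ext i j; simp [mconj_apply]

lemma mconj_sub (M N : Matrix (Fin n) (Fin n) ℂ) :
    mconj (M - N) = mconj M - mconj N := by
  ext i j; simp [mconj_apply]

lemma mconj_mul (M N : Matrix (Fin n) (Fin n) ℂ) :
    mconj (M * N) = mconj M * mconj N := by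
  ext i j; simp [mconj_apply, Matrix.mul_apply, map_sum]

lemma mconj_mconj (M : Matrix (Fin n) (Fin n) ℂ) : mconj (mconj M) = M := by
  ext i j; simp [mconj_apply]

lemma mconj_pow (M : Matrix (Fin n) (Fin n) ℂ) (k : ℕ) :
    mconj (M ^ k) = mconj M ^ k := by
  induction k with
  | zero => ext i j; simp [mconj_apply, Matrix.one_apply]
  | succ k ih => rw [pow_succ, pow_succ, mconj_mul, ih]

lemma mconj_conjTranspose (M : Matrix (Fin n) (Fin n) ℂ) :
    mconj (Mᴴ) = Mᵀ := by
  ext i j; simp [mconj_apply, Matrix.conjTranspose_apply]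

lemma conjTranspose_mconj (M : Matrix (Fin n) (Fin n) ℂ) :
    (mconj M)ᴴ = Mᵀ := by
  ext i j; simp [mconj_apply, Matrix.conjTranspose_apply]

lemma continuous_mconj : Continuous (mconj (p := n) (q := n)) :=
  continuous_id.matrix_map Complex.continuous_conj

/-- The conjugation map `M ↦ Aᴴ * mconj M * A` as an additive monoid hom. -/
def conjMap (A : Matrix (Fin n) (Fin n) ℂ) :
    Matrix (Fin n) (Fin n) ℂ →+ Matrix (Fin n) (Fin n) ℂ where
  toFun M := Aᴴ * mconj M * A
  map_zero' := by
    have : mconj (0 : Matrix (Fin n) (Fin n) ℂ) = 0 := by ext i j; simp [mconj_apply]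
    simp [this]
  map_add' M N := by show Aᴴ * mconj (M + N) * A = _; rw [mconj_add, mul_add, add_mul]

lemma continuous_conjMap (A : Matrix (Fin n) (Fin n) ℂ) :
    Continuous (conjMap A) := by
  have : Continuous fun M : Matrix (Fin n) (Fin n) ℂ => Aᴴ * mconj M * A :=
    (continuous_const.matrix_mul continuous_mconj).matrix_mul continuous_const
  exact this

/-- quadratic form functional as additive hom -/
def quadMap (x : Fin n → ℂ) :
    Matrix (Fin n) (Fin n) ℂ →+ ℝ where
  toFun M := (dotProduct (star x) (M *ᵥ x)).re
  map_zero' := by simp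
  map_add' M N := by
    show (star x ⬝ᵥ (M + N) *ᵥ x).re = _
    rw [Matrix.add_mulVec, dotProduct_add, Complex.add_re]

lemma continuous_quadMap (x : Fin n → ℂ) : Continuous (quadMap x) := by
  have : Continuous fun M : Matrix (Fin n) (Fin n) ℂ =>
      (dotProduct (star x) (M *ᵥ x)).re :=
    Complex.continuous_re.comp
      ((continuous_const.dotProduct (continuous_id.matrix_mulVec continuous_const)))
  exact this

end Aux

section Analytic

open scoped Matrix.Norms.L2Operator ENNReal NNReal

lemma pow_norm_small {n : ℕ} (B : Matrix (Fin n) (Fin n) ℂ)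
    (hρ : spectralRadius ℂ B < 1) :
    ∃ r : ℝ≥0, r < 1 ∧ ∀ᶠ k in atTop, ‖B ^ k‖₊ ≤ r ^ k := by
  obtain ⟨r, hr1, hr2⟩ := ENNReal.lt_iff_exists_nnreal_btwn.mp hρ
  refine ⟨r, by exact_mod_cast hr2, ?_⟩
  have h := spectrum.pow_nnnorm_pow_one_div_tendsto_nhds_spectralRadius B
  have h2 : ∀ᶠ k : ℕ in atTop, (‖B ^ k‖₊ : ℝ≥0∞) ^ (1 / (k:ℝ)) < r :=
    h.eventually_lt_const hr1
  filter_upwards [h2, eventually_ge_atTop 1] with k hk hk1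
  have hk0 : (k : ℝ) ≠ 0 := by positivity
  have := ENNReal.rpow_le_rpow hk.le (by positivity : (0:ℝ) ≤ (k:ℝ))
  rw [← ENNReal.rpow_mul, one_div, inv_mul_cancel₀ hk0, ENNReal.rpow_one,
    ENNReal.rpow_natCast] at this
  exact_mod_cast this

lemma bound_eventually {n : ℕ} (B : Matrix (Fin n) (Fin n) ℂ)
    (hρ : spectralRadius ℂ B < 1) (C : Matrix (Fin n) (Fin n) ℂ) :
    ∃ r : ℝ, 0 ≤ r ∧ r < 1 ∧ ∀ᶠ k in atTop,
      ‖(B ^ k)ᴴ * C * B ^ k‖ ≤ ‖C‖ * r ^ k := by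
  obtain ⟨r, hr1, hr⟩ := pow_norm_small B hρ
  have hrr : (r:ℝ) < 1 := by exact_mod_cast hr1
  refine ⟨(r:ℝ)^2, by positivity, by nlinarith [r.coe_nonneg], ?_⟩
  filter_upwards [hr] with k hk
  have hk' : ‖B ^ k‖ ≤ (r:ℝ) ^ k := by exact_mod_cast hk
  have h1 : ‖(B ^ k)ᴴ * C * B ^ k‖ ≤ ‖(B ^ k)ᴴ‖ * ‖C‖ * ‖B ^ k‖ :=
    (norm_mul_le _ _).trans (by gcongr; exact norm_mul_le _ _)
  have h2 : ‖(B ^ k)ᴴ‖ = ‖B ^ k‖ := Matrix.l2_opNorm_conjTranspose _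
  rw [h2] at h1
  calc ‖(B ^ k)ᴴ * C * B ^ k‖ ≤ ‖B ^ k‖ * ‖C‖ * ‖B ^ k‖ := h1
    _ ≤ (r:ℝ)^k * ‖C‖ * (r:ℝ)^k := by gcongr
    _ = ‖C‖ * ((r:ℝ)^2)^k := by ring

lemma summable_terms {n : ℕ} (B : Matrix (Fin n) (Fin n) ℂ)
    (hρ : spectralRadius ℂ B < 1) (C : Matrix (Fin n) (Fin n) ℂ) :
    Summable (fun k : ℕ => (B ^ k)ᴴ * C * B ^ k) := by
  obtain ⟨r, hr0, hr1, hr⟩ := bound_eventually B hρ C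
  exact Summable.of_norm_bounded_eventually_nat
    ((summable_geometric_of_lt_one hr0 hr1).mul_left ‖C‖) hr

lemma tendsto_sandwich_zero {n : ℕ} (B : Matrix (Fin n) (Fin n) ℂ)
    (hρ : spectralRadius ℂ B < 1) (Y : Matrix (Fin n) (Fin n) ℂ) :
    Tendsto (fun N : ℕ => (B ^ N)ᴴ * Y * B ^ N) atTop (𝓝 0) := by
  obtain ⟨r, hr0, hr1, hr⟩ := bound_eventually B hρ Y
  refine squeeze_zero_norm' hr ?_
  simpa using (tendsto_pow_atTop_nhds_zero_of_lt_one hr0 hr1).const_mul ‖Y‖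

end Analytic

theorem conjugate_stein_unique_solution_series_orderPreserving
    (n : ℕ) (A : Matrix (Fin n) (Fin n) ℂ)
    (hρ : spectralRadius ℂ (mconj A * A) < 1) :
    (∀ W : Matrix (Fin n) (Fin n) ℂ, W.IsHermitian →
      ∃ X : Matrix (Fin n) (Fin n) ℂ, X.IsHermitian ∧
        (X - Aᴴ * mconj X * A = W) ∧
        HasSum (fun k : ℕ =>
          ((mconj A * A) ^ k)ᴴ * (W + Aᴴ * mconj W * A) * (mconj A * A) ^ k) X ∧
        (∀ Y : Matrix (Fin n) (Fin n) ℂ, Y.IsHermitian →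
          Y - Aᴴ * mconj Y * A = W → Y = X)) ∧
    (∀ W W' X X' : Matrix (Fin n) (Fin n) ℂ, W.IsHermitian → W'.IsHermitian →
      X.IsHermitian → X'.IsHermitian →
      X - Aᴴ * mconj X * A = W → X' - Aᴴ * mconj X' * A = W' →
      (W - W').PosSemidef → (X - X').PosSemidef) := by
  set B : Matrix (Fin n) (Fin n) ℂ := mconj A * A with hB
  -- auxiliary algebraic facts
  have hBH : Bᴴ = Aᴴ * Aᵀ := by
    rw [hB, Matrix.conjTranspose_mul, conjTranspose_mconj]
  have hABk : ∀ k : ℕ, (A * mconj A) ^ k * A = A * B ^ k := by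
    intro k
    induction k with
    | zero => simp
    | succ k ih =>
      rw [pow_succ', pow_succ', mul_assoc, ih]
      simp only [hB, mul_assoc]
  have hmconjB : mconj B = A * mconj A := by
    rw [hB, mconj_mul, mconj_mconj]
  -- key rewriting of the conjugated term
  have hconj_term : ∀ (C : Matrix (Fin n) (Fin n) ℂ) (k : ℕ),
      Aᴴ * mconj ((B ^ k)ᴴ * C * B ^ k) * A
        = (B ^ k)ᴴ * (Aᴴ * mconj C * A) * B ^ k := by
    intro C k
    have h1 : mconj ((B ^ k)ᴴ * C * B ^ k)
        = (B ^ k)ᵀ * mconj C * (A * mconj A) ^ k := by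
      rw [mconj_mul, mconj_mul, mconj_conjTranspose, mconj_pow, hmconjB]
    have h2 : Aᴴ * (B ^ k)ᵀ = (B ^ k)ᴴ * Aᴴ := by
      have : (B ^ k)ᵀ = ((A * mconj A) ^ k)ᴴ := by
        rw [← conjTranspose_mconj, mconj_pow, hmconjB]
      rw [this, ← Matrix.conjTranspose_mul, hABk, Matrix.conjTranspose_mul]
    rw [h1]
    calc Aᴴ * ((B ^ k)ᵀ * mconj C * (A * mconj A) ^ k) * A
        = (Aᴴ * (B ^ k)ᵀ) * mconj C * ((A * mconj A) ^ k * A) := by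
          simp only [mul_assoc]
      _ = ((B ^ k)ᴴ * Aᴴ) * mconj C * (A * B ^ k) := by rw [h2, hABk]
      _ = (B ^ k)ᴴ * (Aᴴ * mconj C * A) * B ^ k := by simp only [mul_assoc]
  -- the inner identity for Hermitian W
  have hinner : ∀ W : Matrix (Fin n) (Fin n) ℂ, W.IsHermitian →
      Aᴴ * mconj (W + Aᴴ * mconj W * A) * A
        = Aᴴ * mconj W * A + Bᴴ * W * B := by
    intro W hW
    have hWt : mconj W = Wᵀ := by
      conv_lhs => rw [← hW.eq]
      exact mconj_conjTranspose W
    have : mconj (W + Aᴴ * mconj W * A)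
        = mconj W + Aᵀ * W * mconj A := by
      rw [mconj_add, mconj_mul, mconj_mul, mconj_mconj, mconj_conjTranspose]
    rw [this, mul_add, add_mul]
    congr 1
    rw [hBH, hB]
    simp only [mul_assoc]
  -- solve for each Hermitian W: the full existence package
  have main : ∀ W : Matrix (Fin n) (Fin n) ℂ, W.IsHermitian →
      ∃ X : Matrix (Fin n) (Fin n) ℂ, X.IsHermitian ∧
        (X - Aᴴ * mconj X * A = W) ∧
        HasSum (fun k : ℕ => (B ^ k)ᴴ * (W + Aᴴ * mconj W * A) * B ^ k) X ∧
        (∀ Y : Matrix (Fin n) (Fin n) ℂ, Y.IsHermitian →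
          Y - Aᴴ * mconj Y * A = W → Y = X) := by
    intro W hW
    set C : Matrix (Fin n) (Fin n) ℂ := W + Aᴴ * mconj W * A with hC
    set t : ℕ → Matrix (Fin n) (Fin n) ℂ := fun k => (B ^ k)ᴴ * C * B ^ k with ht
    set f : ℕ → Matrix (Fin n) (Fin n) ℂ := fun k => (B ^ k)ᴴ * W * B ^ k with hf
    have hWt : mconj W = Wᵀ := by
      conv_lhs => rw [← hW.eq]
      exact mconj_conjTranspose W
    have hCH : Cᴴ = C := by
      rw [hC]
      simp only [Matrix.conjTranspose_add, Matrix.conjTranspose_mul,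
        Matrix.conjTranspose_conjTranspose, hW.eq, conjTranspose_mconj, hWt,
        hW.transpose.eq]
      rw [← mul_assoc]
    have hsum : Summable t := summable_terms B hρ C
    set X : Matrix (Fin n) (Fin n) ℂ := ∑' k, t k with hXdef
    have hX : HasSum t X := hsum.hasSum
    -- Hermitian
    have hXh : X.IsHermitian := by
      have hstar : HasSum (fun k => star (t k)) (star X) :=
        hX.map (starAddEquiv : Matrix (Fin n) (Fin n) ℂ ≃+ _).toAddMonoidHom
          continuous_star
      have : ∀ k, star (t k) = t k := by
        intro k
        show (t k)ᴴ = t k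
        rw [ht]
        simp only [Matrix.conjTranspose_mul, Matrix.conjTranspose_conjTranspose, hCH]
        simp only [mul_assoc]
      rw [funext this] at hstar
      exact hstar.unique hX
    -- the equation
    have hmap : HasSum (fun k => conjMap A (t k)) (conjMap A X) :=
      hX.map (conjMap A) (continuous_conjMap A)
    have hd : HasSum (fun k => t k - conjMap A (t k)) (X - conjMap A X) :=
      hX.sub hmap
    have hterm : ∀ k, t k - conjMap A (t k) = f k - f (k + 1) := by
      intro k
      have h1 : conjMap A (t k) = (B ^ k)ᴴ * (Aᴴ * mconj C * A) * B ^ k :=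
        hconj_term C k
      have h2 : Aᴴ * mconj C * A = Aᴴ * mconj W * A + Bᴴ * W * B := hinner W hW
      have h3 : (B ^ (k + 1))ᴴ * W * B ^ (k + 1)
          = (B ^ k)ᴴ * (Bᴴ * W * B) * B ^ k := by
        rw [pow_succ']
        simp only [Matrix.conjTranspose_mul, mul_assoc]
      show (B ^ k)ᴴ * C * B ^ k - _ = (B ^ k)ᴴ * W * B ^ k - (B ^ (k + 1))ᴴ * W * B ^ (k + 1)
      rw [h1, h2, h3, hC, mul_add, add_mul, mul_add, add_mul]
      abel
    have hd' : HasSum (fun k => f k - f (k + 1)) (X - conjMap A X) := by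
      rw [← funext hterm]; exact hd
    have htel : Tendsto (fun N => ∑ k ∈ Finset.range N, (f k - f (k + 1)))
        atTop (𝓝 (X - conjMap A X)) := hd'.tendsto_sum_nat
    have htel2 : (fun N => ∑ k ∈ Finset.range N, (f k - f (k + 1)))
        = fun N => f 0 - f N := by
      funext N; exact Finset.sum_range_sub' f N
    have hf0 : f 0 = W := by simp [hf]
    have htel3 : Tendsto (fun N => f 0 - f N) atTop (𝓝 (W - 0)) := by
      rw [hf0]
      exact tendsto_const_nhds.sub (tendsto_sandwich_zero B hρ W)
    have heq : X - conjMap A X = W := by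
      have := tendsto_nhds_unique (htel2 ▸ htel) htel3
      simpa using this
    have heq' : X - Aᴴ * mconj X * A = W := heq
    -- uniqueness
    have huniq : ∀ Y : Matrix (Fin n) (Fin n) ℂ, Y.IsHermitian →
        Y - Aᴴ * mconj Y * A = W → Y = X := by
      intro Y _ hYeq
      have hY1 : Y = W + Aᴴ * mconj Y * A := by
        rw [← hYeq]; abel
      have hY2 : Y = C + Bᴴ * Y * B := by
        have hmc : mconj Y = mconj W + Aᵀ * Y * mconj A := by
          conv_lhs => rw [hY1]
          rw [mconj_add, mconj_mul, mconj_mul, mconj_mconj, mconj_conjTranspose]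
        conv_lhs => rw [hY1, hmc]
        rw [hC, hBH]
        rw [mul_add, add_mul]
        simp only [mul_assoc]
        abel
      have hind : ∀ N : ℕ, Y = (∑ k ∈ Finset.range N, t k) + (B ^ N)ᴴ * Y * B ^ N := by
        intro N
        induction N with
        | zero => simp
        | succ N ih =>
          have h4 : (B ^ (N + 1))ᴴ * Y * B ^ (N + 1)
              = (B ^ N)ᴴ * (Bᴴ * Y * B) * B ^ N := by
            rw [pow_succ']
            simp only [Matrix.conjTranspose_mul, mul_assoc]
          have h5 : t N = (B ^ N)ᴴ * C * B ^ N := rfl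
          rw [Finset.sum_range_succ, h4, h5]
          conv_lhs => rw [ih, hY2]
          rw [mul_add, add_mul, mul_add, add_mul]
          abel
      have hlim1 : Tendsto (fun N => ∑ k ∈ Finset.range N, t k) atTop (𝓝 X) :=
        hX.tendsto_sum_nat
      have hlim2 := tendsto_sandwich_zero B hρ Y
      have hlim : Tendsto (fun N => (∑ k ∈ Finset.range N, t k) + (B ^ N)ᴴ * Y * B ^ N)
          atTop (𝓝 (X + 0)) := hlim1.add hlim2
      have hYc : Tendsto (fun _ : ℕ => Y) atTop (𝓝 (X + 0)) := by
        have := funext hind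
        rw [← this] at hlim
        exact hlim
      have := tendsto_nhds_unique hYc tendsto_const_nhds
      rw [← this, add_zero]
    exact ⟨X, hXh, heq', hX, huniq⟩
  constructor
  · exact main
  · intro W W' X X' hW hW' hX hX' heqX heqX' hpsd
    obtain ⟨X₀, hX₀h, hX₀eq, hX₀sum, hX₀uniq⟩ := main (W - W') (hW.sub hW')
    have hDh : (X - X').IsHermitian := hX.sub hX'
    have hDeq : (X - X') - Aᴴ * mconj (X - X') * A = W - W' := by
      rw [mconj_sub, mul_sub, sub_mul, ← heqX, ← heqX']
      abel
    have hD : X - X' = X₀ := hX₀uniq _ hDh hDeq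
    rw [hD]
    -- `X₀` is positive semidefinite as a sum of positive semidefinite matrices
    have hVh : (W - W').IsHermitian := hW.sub hW'
    have hVt : mconj (W - W') = (W - W')ᵀ := by
      conv_lhs => rw [← hVh.eq]
      exact mconj_conjTranspose _
    have hterm_psd : ∀ k : ℕ,
        ((B ^ k)ᴴ * ((W - W') + Aᴴ * mconj (W - W') * A) * B ^ k).PosSemidef := by
      intro k
      have h1 : (mconj (W - W')).PosSemidef := hVt ▸ hpsd.transpose
      exact (hpsd.add (h1.conjTranspose_mul_mul_same A)).conjTranspose_mul_mul_same _
    refine .of_dotProduct_mulVec_nonneg hX₀h fun x => ?_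
    have hre : 0 ≤ (star x ⬝ᵥ X₀ *ᵥ x).re := by
      have hq : HasSum
          (fun k => quadMap x ((B ^ k)ᴴ * ((W - W') + Aᴴ * mconj (W - W') * A) * B ^ k))
          (quadMap x X₀) := hX₀sum.map (quadMap x) (continuous_quadMap x)
      refine hasSum_le (fun k => ?_) hasSum_zero hq
      have := (hterm_psd k).dotProduct_mulVec_nonneg x
      exact (Complex.le_def.mp this).1
    have hstarz : (starRingEnd ℂ) (star x ⬝ᵥ X₀ *ᵥ x) = star x ⬝ᵥ X₀ *ᵥ x := by
      have h1 : star x ⬝ᵥ X₀ *ᵥ x = star (star (X₀ *ᵥ x) ⬝ᵥ x) :=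
        Matrix.star_dotProduct _ _
      show star (star x ⬝ᵥ X₀ *ᵥ x) = star x ⬝ᵥ X₀ *ᵥ x
      conv_lhs => rw [h1, star_star]
      rw [Matrix.star_mulVec, ← Matrix.dotProduct_mulVec, hX₀h.eq]
    rw [Complex.le_def]
    refine ⟨by simpa using hre, ?_⟩
    have him : (star x ⬝ᵥ X₀ *ᵥ x).im = 0 := (Complex.conj_eq_iff_im.mp hstarz)
    simp [him]

end CDARE
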